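/- arXiv:math/0103240 — 2 statements merged into one kernel-verified Lean document; each statement's English description precedes it below -/
import Mathlib

section
/- Let H be a finite group of order 10, 15, or 20, and let G be an extension of ℤ/5ℤ by H (i.e., there is a short exact sequence 1 → H → G → ℤ/5ℤ → 1). Then the abelianization of G is not a 5-group. -/
/-- Groups of cardinality 2, 3 or 4 are commutative. -/
lemma aux_comm_of_small_card {K : Type*} [Group K]
    (h : Nat.card K = 2 ∨ Nat.card K = 3 ∨ Nat.card K = 4) :
    ∀ a b : K, a * b = b * a := by
  rcases h with h | h | h
  · have : IsCyclic K := isCyclic_of_prime_card (p := 2) h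
    exact fun a b => (IsCyclic.commGroup (α := K)).mul_comm a b
  · have : IsCyclic K := isCyclic_of_prime_card (p := 3) h
    exact fun a b => (IsCyclic.commGroup (α := K)).mul_comm a b
  · haveI : Fact (Nat.Prime 2) := ⟨by norm_num⟩
    exact IsPGroup.commutative_of_card_eq_prime_sq (p := 2) (by simpa using h)

/-- If `G` is an extension of `ℤ/5ℤ` by a group `H` of order 10, 15 or 20
(i.e. `H ⊴ G` with `G/H ≅ ℤ/5ℤ`), then the abelianization of `G` is not a
5-group. -/
theorem stmt6 {G : Type*} [Group G] [Finite G] (H : Subgroup G) (hN : H.Normal)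
    (hH : Nat.card H = 10 ∨ Nat.card H = 15 ∨ Nat.card H = 20)
    (hQ : Nonempty ((G ⧸ H) ≃* Multiplicative (ZMod 5))) :
    ¬ IsPGroup 5 (Abelianization G) := by
  intro hab
  haveI : Fact (Nat.Prime 5) := ⟨by norm_num⟩
  -- the order of G
  have hq5 : Nat.card (G ⧸ H) = 5 := by
    rw [Nat.card_congr hQ.some.toEquiv]
    simp [Nat.card_eq_fintype_card]
  have hGcard : Nat.card G = Nat.card (G ⧸ H) * Nat.card H :=
    Subgroup.card_eq_card_quotient_mul_card_subgroup H
  obtain ⟨m, hm, hG⟩ : ∃ m, (m = 2 ∨ m = 3 ∨ m = 4) ∧ Nat.card G = 25 * m := by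
    rcases hH with h | h | h
    · exact ⟨2, Or.inl rfl, by rw [hGcard, hq5, h]⟩
    · exact ⟨3, Or.inr (Or.inl rfl), by rw [hGcard, hq5, h]⟩
    · exact ⟨4, Or.inr (Or.inr rfl), by rw [hGcard, hq5, h]⟩
  -- a Sylow 5-subgroup
  obtain ⟨P⟩ : Nonempty (Sylow 5 G) := inferInstance
  obtain ⟨k, hk⟩ := IsPGroup.iff_card.mp P.isPGroup'
  have hnd : ¬ (5 : ℕ) ∣ (P : Subgroup G).index := P.not_dvd_index
  set n := (P : Subgroup G).index with hn
  have hmul : Nat.card (P : Subgroup G) * n = Nat.card G :=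
    Subgroup.card_mul_index _
  -- n divides m
  have hcop5 : Nat.Coprime 5 n := (Nat.Prime.coprime_iff_not_dvd (by norm_num)).mpr hnd
  have hcop : Nat.Coprime 25 n := by
    have := hcop5.pow_left 2
    norm_num at this
    exact this
  have hdvdG : n ∣ Nat.card G := Subgroup.index_dvd_card _
  have hnm : n ∣ m := by
    rw [hG] at hdvdG
    exact (Nat.Coprime.dvd_of_dvd_mul_left hcop.symm) hdvdG
  have hm4 : m ≤ 4 := by rcases hm with rfl | rfl | rfl <;> norm_num
  have hmpos : 0 < m := by rcases hm with rfl | rfl | rfl <;> norm_num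
  have hn4 : n ≤ 4 := le_trans (Nat.le_of_dvd hmpos hnm) hm4
  -- n ≠ 1
  have hn1 : n ≠ 1 := by
    intro h1
    rw [h1, mul_one, hG, hk] at hmul
    have hmdvd : m ∣ 5 ^ k := ⟨25, by omega⟩
    have hmcop : Nat.Coprime m 5 := by
      rcases hm with rfl | rfl | rfl <;> norm_num
    have := Nat.eq_one_of_dvd_coprimes ((hmcop.pow_right k)) (dvd_refl m) hmdvd
    omega
  -- the number of Sylow 5-subgroups is 1, so P is normal
  have hc1 : Nat.card (Sylow 5 G) = 1 := by
    have hdvd : Nat.card (Sylow 5 G) ∣ n := P.card_dvd_index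
    have hmod : Nat.card (Sylow 5 G) % 5 = 1 % 5 := card_sylow_modEq_one 5 G
    have hle : Nat.card (Sylow 5 G) ≤ 4 :=
      le_trans (Nat.le_of_dvd (by omega) hdvd) hn4
    omega
  have hnormal : (P : Subgroup G).Normal := by
    apply Subgroup.normalizer_eq_top_iff.mp
    apply Subgroup.index_eq_one.mp
    exact P.card_eq_index_normalizer.symm.trans hc1
  -- the quotient G ⧸ P is abelian of order n ∈ {2,3,4}
  have hqcard : Nat.card (G ⧸ (P : Subgroup G)) = n := (Subgroup.index_eq_card _).symm
  have hn234 : n = 2 ∨ n = 3 ∨ n = 4 := by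
    have hn2 : 2 ≤ n := by
      rcases Nat.eq_zero_or_pos n with h0 | hp
      · exact absurd (hn ▸ h0) Subgroup.index_ne_zero_of_finite
      · omega
    rcases hm with rfl | rfl | rfl <;> interval_cases n <;> omega
  letI : CommGroup (G ⧸ (P : Subgroup G)) :=
    { (inferInstance : Group (G ⧸ (P : Subgroup G))) with
      mul_comm := aux_comm_of_small_card (by rw [hqcard]; exact hn234) }
  -- the quotient map factors through the abelianization
  let f : Abelianization G →* G ⧸ (P : Subgroup G) :=
    Abelianization.lift (QuotientGroup.mk' (P : Subgroup G))
  have hfsurj : Function.Surjective f := by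
    intro x
    obtain ⟨g, rfl⟩ := QuotientGroup.mk'_surjective (P : Subgroup G) x
    exact ⟨Abelianization.of g, Abelianization.lift_apply_of _ g⟩
  have hP5 : IsPGroup 5 (G ⧸ (P : Subgroup G)) := hab.of_surjective f hfsurj
  obtain ⟨j, hj⟩ := IsPGroup.iff_card.mp hP5
  rw [hqcard] at hj
  -- contradiction: n ∈ {2,3,4} is not a power of 5
  rcases Nat.eq_zero_or_pos j with rfl | hjp
  · simp at hj; omega
  · have : (5 : ℕ) ∣ 5 ^ j := dvd_pow_self 5 hjp.ne'
    rw [← hj] at this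
    have := Nat.le_of_dvd (by omega) this
    omega
end

section
/- Let R be a commutative ring of characteristic 3 and a ∈ R. Suppose the 2×2 matrices σ = [[1,a],[0,1]] and τ = [[1,0],[1,1]] over R generate a group M of order 27. Then a = 0. -/
open scoped commutatorElement

lemma commutator_mem_center_of_card27 {G : Type*} [Group G] (h : Nat.card G = 27)
    (x y : G) : ⁅x, y⁆ ∈ Subgroup.center G := by
  haveI : Fact (Nat.Prime 3) := ⟨by norm_num⟩
  haveI hfin : Finite G := Nat.finite_of_card_ne_zero (by omega)
  have hG3 : Nat.card G = 3 ^ 3 := by omega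
  have hp : IsPGroup 3 G := IsPGroup.of_card hG3
  haveI : Nontrivial G := by
    rw [← Finite.one_lt_card_iff_nontrivial]; omega
  haveI hZnt : Nontrivial (Subgroup.center G) := hp.center_nontrivial
  set Z := Subgroup.center G with hZ
  have hcard : Nat.card G = Nat.card (G ⧸ Z) * Nat.card Z :=
    Subgroup.card_eq_card_quotient_mul_card_subgroup Z
  have hZdvd : Nat.card Z ∣ 27 := h ▸ Subgroup.card_subgroup_dvd_card Z
  have hZgt : 1 < Nat.card Z := Finite.one_lt_card
  have hZcases : Nat.card Z = 3 ∨ Nat.card Z = 9 ∨ Nat.card Z = 27 := by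
    have hle : Nat.card Z ≤ 27 := Nat.le_of_dvd (by norm_num) hZdvd
    interval_cases (Nat.card Z) <;> omega
  have hQcomm : ∀ u v : G ⧸ Z, u * v = v * u := by
    rcases hZcases with hZc | hZc | hZc
    · -- quotient has order 9 = 3^2
      rw [hZc] at hcard
      have hQ : Nat.card (G ⧸ Z) = 3 ^ 2 := by omega
      exact IsPGroup.commutative_of_card_eq_prime_sq hQ
    · -- quotient has order 3: cyclic
      rw [hZc] at hcard
      have hQ : Nat.card (G ⧸ Z) = 3 := by omega
      haveI : IsCyclic (G ⧸ Z) := isCyclic_of_prime_card hQ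
      letI := IsCyclic.commGroup (α := G ⧸ Z)
      exact mul_comm
    · -- quotient trivial
      rw [hZc] at hcard
      have hQ : Nat.card (G ⧸ Z) = 1 := by omega
      haveI : Subsingleton (G ⧸ Z) := (Nat.card_eq_one_iff_unique.mp hQ).1
      intro u v; exact Subsingleton.elim _ _
  have hker : ⁅x, y⁆ ∈ (QuotientGroup.mk' Z).ker := by
    rw [MonoidHom.mem_ker, map_commutatorElement]
    exact commutatorElement_eq_one_iff_commute.mpr (hQcomm _ _)
  rwa [QuotientGroup.ker_mk'] at hker

/-- If `R` is a commutative ring of characteristic 3, `a ∈ R`, and the invertible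
matrices `σ = [[1,a],[0,1]]` and `τ = [[1,0],[1,1]]` generate a group of order
27, then `a = 0`. -/
theorem stmt9 {R : Type*} [CommRing R] (hchar : (3 : R) = 0) (a : R)
    (σ τ : (Matrix (Fin 2) (Fin 2) R)ˣ)
    (hσ : (σ : Matrix (Fin 2) (Fin 2) R) = !![1, a; 0, 1])
    (hτ : (τ : Matrix (Fin 2) (Fin 2) R) = !![1, 0; 1, 1])
    (hM : Nat.card (Subgroup.closure {σ, τ}) = 27) :
    a = 0 := by
  have hσH : σ ∈ Subgroup.closure {σ, τ} := Subgroup.subset_closure (Set.mem_insert _ _)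
  have hτH : τ ∈ Subgroup.closure {σ, τ} := Subgroup.subset_closure (Set.mem_insert_of_mem _ rfl)
  have hc := commutator_mem_center_of_card27 hM ⟨σ, hσH⟩ ⟨τ, hτH⟩
  have hcomm := (Subgroup.mem_center_iff.mp hc) ⟨τ, hτH⟩
  have hu : τ * (σ * τ * σ⁻¹ * τ⁻¹) = (σ * τ * σ⁻¹ * τ⁻¹) * τ := by
    have h2 := congrArg (Subtype.val) hcomm
    simpa [commutatorElement_def] using h2
  have hσi : (↑σ⁻¹ : Matrix (Fin 2) (Fin 2) R) = !![1, -a; 0, 1] := by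
    apply Units.inv_eq_of_mul_eq_one_right
    rw [hσ]
    ext i j
    fin_cases i <;> fin_cases j <;>
      simp [Matrix.mul_apply, Fin.sum_univ_two, Matrix.one_apply]
  have hτi : (↑τ⁻¹ : Matrix (Fin 2) (Fin 2) R) = !![1, 0; -1, 1] := by
    apply Units.inv_eq_of_mul_eq_one_right
    rw [hτ]
    ext i j
    fin_cases i <;> fin_cases j <;>
      simp [Matrix.mul_apply, Fin.sum_univ_two, Matrix.one_apply]
  have hm := congrArg Units.val hu
  simp only [Units.val_mul, hσ, hτ, hσi, hτi] at hm
  have e00 := congrFun (congrFun hm 0) 0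
  have e10 := congrFun (congrFun hm 1) 0
  simp [Matrix.mul_apply, Fin.sum_univ_two] at e00 e10
  linear_combination a * hchar - e10 + e00
end
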